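/- Let C be a rigid abelian braided monoidal category whose tensor product is additive in each variable, and suppose that the endomorphism ring End(𝟙) of the unit object is a field. Then C is integral: for any morphisms f : A → A' and g : B → B' in C, if f ⊗ g = 0 then f = 0 or g = 0. -/

import Mathlib

open CategoryTheory CategoryTheory.Limits MonoidalCategory

namespace KahnIntegrality

variable {C : Type*} [Category C] [Abelian C] [MonoidalCategory C] [MonoidalPreadditive C]
  [RigidCategory C]

lemma mono_whiskerLeft (X : C) {Y Z : C} (f : Y ⟶ Z) [Mono f] : Mono (X ◁ f) := by
  haveI : (tensorLeft X).PreservesMonomorphisms :=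
    Functor.preservesMonomorphisms_of_adjunction (tensorLeftAdjunction X (Xᘁ))
  have h := (tensorLeft X).map_mono f
  exact h

lemma epi_whiskerLeft (X : C) {Y Z : C} (f : Y ⟶ Z) [Epi f] : Epi (X ◁ f) := by
  haveI : (tensorLeft X).PreservesEpimorphisms :=
    Functor.preservesEpimorphisms_of_adjunction (tensorLeftAdjunction (ᘁX) X)
  have h := (tensorLeft X).map_epi f
  exact h

lemma mono_whiskerRight (X : C) {Y Z : C} (f : Y ⟶ Z) [Mono f] : Mono (f ▷ X) := by
  haveI : (tensorRight X).PreservesMonomorphisms :=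
    Functor.preservesMonomorphisms_of_adjunction (tensorRightAdjunction (ᘁX) X)
  have h := (tensorRight X).map_mono f
  exact h

lemma epi_whiskerRight (X : C) {Y Z : C} (f : Y ⟶ Z) [Epi f] : Epi (f ▷ X) := by
  haveI : (tensorRight X).PreservesEpimorphisms :=
    Functor.preservesEpimorphisms_of_adjunction (tensorRightAdjunction X (Xᘁ))
  have h := (tensorRight X).map_epi f
  exact h

lemma isZero_src_of_mono {X Z : C} (f : X ⟶ Z) [Mono f] (hZ : IsZero Z) : IsZero X :=
  IsZero.of_mono_eq_zero f (hZ.eq_of_tgt f 0)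

lemma eval_ne_zero {U : C} [HasRightDual U] (hU : ¬ IsZero U) : ε_ U (Uᘁ) ≠ 0 := by
  intro h0
  apply hU
  have h3 := ExactPairing.evaluation_coevaluation U (Uᘁ)
  rw [h0] at h3
  simp only [MonoidalPreadditive.whiskerLeft_zero, comp_zero] at h3
  rw [IsZero.iff_id_eq_zero]
  have : 𝟙 U = (λ_ U).inv ≫ ((λ_ U).hom ≫ (ρ_ U).inv) ≫ (ρ_ U).hom := by simp
  rw [this, ← h3]
  simp

lemma coev_ne_zero {U : C} [HasRightDual U] (hU : ¬ IsZero U) : η_ U (Uᘁ) ≠ 0 := by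
  intro h0
  apply hU
  have h3 := ExactPairing.evaluation_coevaluation U (Uᘁ)
  rw [h0] at h3
  simp only [MonoidalPreadditive.zero_whiskerRight, zero_comp] at h3
  rw [IsZero.iff_id_eq_zero]
  have : 𝟙 U = (λ_ U).inv ≫ ((λ_ U).hom ≫ (ρ_ U).inv) ≫ (ρ_ U).hom := by simp
  rw [this, ← h3]
  simp

lemma tensorLeftHomEquiv_symm_zero (X Y Y' Z : C) [ExactPairing Y Y'] :
    (tensorLeftHomEquiv X Y Y' Z).symm 0 = 0 := by
  simp [tensorLeftHomEquiv]

variable [BraidedCategory C]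

lemma isIso_of_mono_to_unit (hC : IsField (End (𝟙_ C)))
    {U : C} (m : U ⟶ 𝟙_ C) [Mono m] (hU : ¬ IsZero U) : IsIso m := by
  set Q := cokernel m with hQ
  set q : 𝟙_ C ⟶ Q := cokernel.π m with hq
  haveI : Mono (m ▷ Q) := mono_whiskerRight Q m
  haveI : Epi (U ◁ q) := epi_whiskerLeft U q
  -- `U ⊗ Q` is zero
  have hmq : (U ◁ q) ≫ (m ▷ Q) = 0 := by
    rw [← tensorHom_def', MonoidalCategory.tensorHom_def, MonoidalCategory.whiskerRight_id, MonoidalCategory.id_whiskerLeft,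
      ← unitors_inv_equal]
    slice_lhs 3 4 => rw [Iso.inv_hom_id]
    slice_lhs 2 4 => rw [Category.id_comp, cokernel.condition]
    simp
  have hUq : U ◁ q = 0 := zero_of_comp_mono (m ▷ Q) hmq
  have hUQ : IsZero (U ⊗ Q) := by
    rw [IsZero.iff_id_eq_zero]
    exact (cancel_epi (U ◁ q)).1 (by simp [hUq])
  -- the evaluation map factors through `m`
  have hεq : ε_ U (Uᘁ) ≫ q = 0 := by
    have h1 : (tensorLeftHomEquiv U U (Uᘁ) Q) (ε_ U (Uᘁ) ≫ q) = 0 := hUQ.eq_of_tgt _ 0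
    have h2 := congrArg (tensorLeftHomEquiv U U (Uᘁ) Q).symm h1
    rwa [Equiv.symm_apply_apply, tensorLeftHomEquiv_symm_zero] at h2
  set e : (Uᘁ) ⊗ U ⟶ U := Abelian.monoLift m (ε_ U (Uᘁ)) hεq with he'
  have he : e ≫ m = ε_ U (Uᘁ) := Abelian.monoLift_comp m _ hεq
  -- `m ▷ Uᘁ` is an isomorphism
  haveI : IsSplitEpi (m ▷ (Uᘁ)) := IsSplitEpi.mk'
    ⟨(λ_ (Uᘁ)).hom ≫ (ρ_ (Uᘁ)).inv ≫ ((Uᘁ) ◁ η_ U (Uᘁ)) ≫ (α_ _ _ _).inv ≫ (e ▷ (Uᘁ)), by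
      simp only [Category.assoc]
      rw [← comp_whiskerRight, he, ExactPairing.coevaluation_evaluation]
      simp⟩
  haveI : Mono (m ▷ (Uᘁ)) := mono_whiskerRight (Uᘁ) m
  haveI hIso : IsIso (m ▷ (Uᘁ)) := isIso_of_mono_of_epi _
  -- construct a nonzero map `Uᘁ ⟶ 𝟙` using the braiding
  have hε : ε_ U (Uᘁ) ≠ 0 := eval_ne_zero hU
  set t : (Uᘁ) ⟶ 𝟙_ C :=
    (λ_ (Uᘁ)).inv ≫ inv (m ▷ (Uᘁ)) ≫ (β_ U (Uᘁ)).hom ≫ ε_ U (Uᘁ) with ht'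
  have ht : t ≠ 0 := by
    intro h0
    apply hε
    have : ε_ U (Uᘁ) = (β_ U (Uᘁ)).inv ≫ (m ▷ (Uᘁ)) ≫ (λ_ (Uᘁ)).hom ≫ t := by
      rw [ht']
      simp
    rw [this, h0, comp_zero, comp_zero, comp_zero]
  -- transpose to get a nonzero map `𝟙 ⟶ U`
  set s : 𝟙_ C ⟶ U ⊗ 𝟙_ C :=
    (tensorLeftHomEquiv (𝟙_ C) U (Uᘁ) (𝟙_ C)) ((ρ_ (Uᘁ)).hom ≫ t) with hs'
  have hs : s ≠ 0 := by
    intro h0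
    apply ht
    have h1 := congrArg (tensorLeftHomEquiv (𝟙_ C) U (Uᘁ) (𝟙_ C)).symm (hs' ▸ h0)
    rw [Equiv.symm_apply_apply, tensorLeftHomEquiv_symm_zero] at h1
    have : t = (ρ_ (Uᘁ)).inv ≫ ((ρ_ (Uᘁ)).hom ≫ t) := by simp
    rw [this, h1, comp_zero]
  set s' : 𝟙_ C ⟶ U := s ≫ (ρ_ U).hom with hs''
  have hs2 : s' ≠ 0 := by
    intro h0
    apply hs
    have : s = s' ≫ (ρ_ U).inv := by rw [hs'']; simp
    rw [this, h0, zero_comp]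
  -- use the field structure to conclude `m` is split epi
  have ha : (s' ≫ m : End (𝟙_ C)) ≠ 0 := fun h0 => hs2 (zero_of_comp_mono m h0)
  obtain ⟨b, hb⟩ := hC.mul_inv_cancel ha
  rw [End.mul_def, End.one_def] at hb
  haveI : IsSplitEpi m := IsSplitEpi.mk' ⟨b ≫ s', by rw [Category.assoc]; exact hb⟩
  exact isIso_of_mono_of_epi m

lemma simple_unit (hC : IsField (End (𝟙_ C))) : Simple (𝟙_ C) := by
  have h10 : (𝟙 (𝟙_ C) : End (𝟙_ C)) ≠ 0 := by
    intro h
    obtain ⟨x, y, hxy⟩ := hC.exists_pair_ne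
    apply hxy
    have h1 : (1 : End (𝟙_ C)) = 0 := by rw [End.one_def, h]
    calc x = x * 1 := (mul_one x).symm
      _ = y * 1 := by rw [h1, mul_zero, mul_zero]
      _ = y := mul_one y
  refine ⟨fun {Y} f hmono => ⟨fun hiso => ?_, fun hne => ?_⟩⟩
  · intro h0
    apply h10
    rw [← IsIso.inv_hom_id f]
    simp [h0]
  · have hY : ¬ IsZero Y := fun hz => hne (hz.eq_of_src f 0)
    exact isIso_of_mono_to_unit hC f hY

end KahnIntegrality

open KahnIntegrality

/-- **Remark r3 of Kahn, "Exactness and faithfulness of monoidal functors"** (integrality).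
A rigid abelian braided monoidal category with biadditive tensor product in which
`End(𝟙)` is a field is integral: `f ⊗ g = 0` implies `f = 0` or `g = 0`. -/
theorem integral_of_rigid_abelian
    {C : Type*} [Category C] [Abelian C] [MonoidalCategory C] [MonoidalPreadditive C]
    [BraidedCategory C] [RigidCategory C]
    (hC : IsField (End (𝟙_ C)))
    {A A' B B' : C} (f : A ⟶ A') (g : B ⟶ B') (h : f ⊗ₘ g = 0) :
    f = 0 ∨ g = 0 := by
  by_contra hc
  push_neg at hc
  obtain ⟨hf, hg⟩ := hc
  haveI : Simple (𝟙_ C) := simple_unit hC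
  set I := Abelian.image f with hI'
  set J := Abelian.image g with hJ'
  have hfacf : Abelian.factorThruImage f ≫ Abelian.image.ι f = f := Abelian.image.fac f
  have hfacg : Abelian.factorThruImage g ≫ Abelian.image.ι g = g := Abelian.image.fac g
  have h0 : (Abelian.factorThruImage f ⊗ₘ Abelian.factorThruImage g) ≫
      (Abelian.image.ι f ⊗ₘ Abelian.image.ι g) = 0 := by
    rw [tensorHom_comp_tensorHom, hfacf, hfacg, h]
  haveI : Epi (Abelian.factorThruImage f ▷ B) := epi_whiskerRight B _
  haveI : Epi (I ◁ Abelian.factorThruImage g) := epi_whiskerLeft I _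
  haveI : Epi (Abelian.factorThruImage f ⊗ₘ Abelian.factorThruImage g) := by
    rw [MonoidalCategory.tensorHom_def]
    exact epi_comp _ _
  haveI : Mono (Abelian.image.ι f ▷ J) := mono_whiskerRight J _
  haveI : Mono (A' ◁ Abelian.image.ι g) := mono_whiskerLeft A' _
  haveI : Mono (Abelian.image.ι f ⊗ₘ Abelian.image.ι g) := by
    rw [MonoidalCategory.tensorHom_def]
    exact mono_comp _ _
  have hι : Abelian.image.ι f ⊗ₘ Abelian.image.ι g = 0 := zero_of_epi_comp _ h0
  have hIJ : IsZero (I ⊗ J) := IsZero.of_mono_eq_zero _ hι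
  have hI : ¬ IsZero I := by
    intro hz
    exact hf (by rw [← hfacf, hz.eq_of_src (Abelian.image.ι f) 0, comp_zero])
  have hJ : ¬ IsZero J := by
    intro hz
    exact hg (by rw [← hfacg, hz.eq_of_src (Abelian.image.ι g) 0, comp_zero])
  -- the coevaluation of `J` is a nonzero map out of the simple unit, hence mono
  have hη : η_ J (Jᘁ) ≠ 0 := coev_ne_zero hJ
  haveI : Mono (η_ J (Jᘁ)) := by
    apply Abelian.mono_of_kernel_ι_eq_zero
    apply mono_to_simple_zero_of_not_iso
    intro hiso
    apply hη
    haveI := hiso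
    rw [← cancel_epi (kernel.ι (η_ J (Jᘁ))), kernel.condition, comp_zero]
  haveI : Mono (I ◁ η_ J (Jᘁ)) := mono_whiskerLeft I _
  have hzero : IsZero (I ⊗ (J ⊗ (Jᘁ))) := by
    have h1 : IsZero ((I ⊗ J) ⊗ (Jᘁ)) := by
      rw [IsZero.iff_id_eq_zero, ← MonoidalCategory.id_whiskerRight,
        (IsZero.iff_id_eq_zero _).1 hIJ, MonoidalPreadditive.zero_whiskerRight]
    exact h1.of_iso (α_ I J (Jᘁ)).symm
  have h2 : IsZero (I ⊗ 𝟙_ C) := isZero_src_of_mono (I ◁ η_ J (Jᘁ)) hzero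
  exact hI (h2.of_iso (ρ_ I).symm)
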